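/- Let (F_t)_{t≥1} be a filtration and (X_t)_{t≥1} a sequence of Bernoulli random variables with P[X_t = 1 | F_{t−1}] = p_t, where p_t is F_{t−1}-measurable. Then for any δ > 0, the probability that there exists n with Σ_{t=1}^n X_t < (1/2)·Σ_{t=1}^n p_t − log(1/δ) is at most δ. -/

import Mathlib

open MeasureTheory

section Ville

open Finset

/-- Ville's maximal inequality for nonnegative supermartingales, finite horizon. -/
lemma stmt10_ville_fin {Ω : Type*} {m0 : MeasurableSpace Ω} {μ : Measure Ω}
    [IsProbabilityMeasure μ] {ℱ : Filtration ℕ m0} {M : ℕ → Ω → ℝ}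
    (hM : Supermartingale M ℱ μ) (hnonneg : ∀ n ω, 0 ≤ M n ω)
    {ε : ℝ} (hε : 0 < ε) (n : ℕ) :
    ENNReal.ofReal ε * μ {ω | ∃ k ≤ n, ε ≤ M k ω} ≤ ENNReal.ofReal (∫ ω, M 0 ω ∂μ) := by
  set A : Set Ω := {ω | ∃ k ≤ n, ε ≤ M k ω} with hA
  set τ : Ω → WithTop ℕ := fun ω ↦ (hittingBtwn M (Set.Ici ε) 0 n ω : ℕ) with hτdef
  have hτ : IsStoppingTime ℱ τ := hM.stronglyAdapted.adapted.isStoppingTime_hittingBtwn measurableSet_Ici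
  have hτle : ∀ ω, τ ω ≤ n := fun ω => WithTop.coe_le_coe.2 (hittingBtwn_le ω)
  have hsvneg : stoppedValue (-M) τ = -stoppedValue M τ := rfl
  have hint : Integrable (stoppedValue M τ) μ := by
    have := (hM.neg.integrable_stoppedValue hτ hτle)
    rw [hsvneg] at this
    simpa using this.neg
  have hkey : ∀ ω ∈ A, ε ≤ stoppedValue M τ ω := by
    intro ω hω
    obtain ⟨k, hk, hke⟩ := hω
    exact stoppedValue_hittingBtwn_mem ⟨k, ⟨Nat.zero_le _, hk⟩, hke⟩
  have hAmeas : MeasurableSet A := by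
    have : A = ⋃ k ∈ Finset.range (n + 1), {ω | ε ≤ M k ω} := by
      ext ω
      simp [hA, Nat.lt_succ_iff]
    rw [this]
    refine MeasurableSet.biUnion (Finset.range (n + 1)).countable_toSet fun k _ => ?_
    exact measurableSet_le measurable_const
      ((hM.stronglyMeasurable k).measurable.le (ℱ.le k))
  have h1 : ε * (μ A).toReal ≤ ∫ ω in A, stoppedValue M τ ω ∂μ :=
    setIntegral_ge_of_const_le_real hAmeas (measure_ne_top _ _) hkey hint.integrableOn
  have h2 : ∫ ω in A, stoppedValue M τ ω ∂μ ≤ ∫ ω, stoppedValue M τ ω ∂μ := by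
    refine setIntegral_le_integral hint ?_
    filter_upwards with ω using hnonneg _ ω
  have h3 : ∫ ω, stoppedValue M τ ω ∂μ ≤ (∫ ω, M 0 ω ∂μ) := by
    have h := hM.neg.expected_stoppedValue_mono (isStoppingTime_const ℱ 0) hτ
      (fun ω => WithTop.coe_le_coe.2 (Nat.zero_le _)) hτle
    rw [hsvneg, stoppedValue_const] at h
    have h' : -∫ ω, M 0 ω ∂μ ≤ -∫ ω, stoppedValue M τ ω ∂μ := by
      simpa [integral_neg] using h
    linarith
  have hfin : ENNReal.ofReal ε * μ A ≠ ⊤ := ENNReal.mul_ne_top (by simp) (measure_ne_top _ _)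
  rw [ENNReal.le_ofReal_iff_toReal_le hfin (le_trans (by positivity) ((h1.trans h2).trans h3)),
    ENNReal.toReal_mul, ENNReal.toReal_ofReal hε.le]
  exact (h1.trans h2).trans h3

/-- Ville's maximal inequality for nonnegative supermartingales. -/
lemma stmt10_ville {Ω : Type*} {m0 : MeasurableSpace Ω} {μ : Measure Ω}
    [IsProbabilityMeasure μ] {ℱ : Filtration ℕ m0} {M : ℕ → Ω → ℝ}
    (hM : Supermartingale M ℱ μ) (hnonneg : ∀ n ω, 0 ≤ M n ω)
    {ε : ℝ} (hε : 0 < ε) :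
    μ {ω | ∃ n, ε ≤ M n ω} ≤ ENNReal.ofReal (∫ ω, M 0 ω ∂μ) / ENNReal.ofReal ε := by
  have hU : {ω | ∃ n, ε ≤ M n ω} = ⋃ n, {ω | ∃ k ≤ n, ε ≤ M k ω} := by
    ext ω
    constructor
    · rintro ⟨n, hn⟩; exact Set.mem_iUnion.2 ⟨n, n, le_rfl, hn⟩
    · rintro h
      obtain ⟨n, k, _, hk⟩ := Set.mem_iUnion.1 h
      exact ⟨k, hk⟩
  rw [hU]
  have hmono : Monotone fun n => {ω | ∃ k ≤ n, ε ≤ M k ω} := by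
    intro a b hab ω ⟨k, hk, hke⟩
    exact ⟨k, hk.trans hab, hke⟩
  rw [hmono.directed_le.measure_iUnion]
  refine iSup_le fun n => ?_
  rw [ENNReal.le_div_iff_mul_le (Or.inl (by simp [hε])) (Or.inl ENNReal.ofReal_ne_top)]
  rw [mul_comm]
  exact stmt10_ville_fin hM hnonneg hε n

end Ville

lemma stmt10_exp_mul_one_sub_le (x : ℝ) : Real.exp x * (1 - x) ≤ 1 := by
  have h1 : 1 - x ≤ Real.exp (-x) := by
    have := Real.add_one_le_exp (-x); linarith
  calc Real.exp x * (1 - x) ≤ Real.exp x * Real.exp (-x) :=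
        mul_le_mul_of_nonneg_left h1 (Real.exp_pos _).le
    _ = 1 := by rw [← Real.exp_add]; simp

/-- time-uniform lower-tail bound for adapted Bernoulli sums:
if `X_t ∈ {0,1}` with `E[X_t | F_{t−1}] = p_t` (`p_t` predictable), then
`P(∃ n, Σ_{t≤n} X_t < (Σ_{t≤n} p_t)/2 − log(1/δ)) ≤ δ`. -/
theorem stmt10 {Ω : Type*} {m0 : MeasurableSpace Ω} (μ : Measure Ω)
    [IsProbabilityMeasure μ] (ℱ : Filtration ℕ m0)
    (X p : ℕ → Ω → ℝ)
    (hX01 : ∀ t ω, X t ω = 0 ∨ X t ω = 1)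
    (hXadapted : Adapted ℱ X)
    (hppred : ∀ t, 1 ≤ t → StronglyMeasurable[ℱ (t - 1)] (p t))
    (hcond : ∀ t, 1 ≤ t → μ[X t|ℱ (t - 1)] =ᵐ[μ] p t)
    (δ : ℝ) (hδ : 0 < δ) :
    μ {ω | ∃ n : ℕ, ∑ t ∈ Finset.Icc 1 n, X t ω
        < (∑ t ∈ Finset.Icc 1 n, p t ω) / 2 - Real.log (1 / δ)}
      ≤ ENNReal.ofReal δ := by
  classical
  set c : ℝ := 1 - Real.exp (-1) with hcdef
  have hexp1 : Real.exp (-1) < 1 / 2 := by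
    have h9 : (2.7182818283 : ℝ) < Real.exp 1 := Real.exp_one_gt_d9
    have h2 : (2 : ℝ) < Real.exp 1 := by linarith
    rw [Real.exp_neg]
    rw [inv_lt_comm₀ (Real.exp_pos _) (by norm_num : (0:ℝ) < 1/2)]
    simpa using h2
  have hc_half : 1 / 2 < c := by simp only [hcdef]; linarith
  have hc_pos : 0 < c := by linarith
  set S : ℕ → Ω → ℝ := fun n ω => ∑ t ∈ Finset.Icc 1 n, X t ω with hSdef
  set P : ℕ → Ω → ℝ := fun n ω => ∑ t ∈ Finset.Icc 1 n, p t ω with hPdef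
  set M : ℕ → Ω → ℝ := fun n ω => Real.exp (c * P n ω - S n ω) with hMdef
  have hX0 : ∀ t ω, 0 ≤ X t ω := fun t ω => by rcases hX01 t ω with h | h <;> simp [h]
  have hX1 : ∀ t ω, X t ω ≤ 1 := fun t ω => by rcases hX01 t ω with h | h <;> simp [h]
  have hXint : ∀ t, Integrable (X t) μ := fun t =>
    (integrable_const (1 : ℝ)).mono' ((hXadapted.stronglyAdapted t).mono (ℱ.le t)).aestronglyMeasurable
      (Filter.Eventually.of_forall fun ω => by
        rw [Real.norm_eq_abs, abs_of_nonneg (hX0 t ω)]; exact hX1 t ω)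
  have hp01 : ∀ᵐ ω ∂μ, ∀ t, 1 ≤ t → 0 ≤ p t ω ∧ p t ω ≤ 1 := by
    rw [MeasureTheory.ae_all_iff]
    intro t
    by_cases ht : 1 ≤ t
    · have h0 : 0 ≤ᵐ[μ] μ[X t|ℱ (t - 1)] :=
        condExp_nonneg (Filter.Eventually.of_forall fun ω => hX0 t ω)
      have h1 : μ[X t|ℱ (t - 1)] ≤ᵐ[μ] fun _ => (1 : ℝ) := by
        have hm := condExp_mono (m := ℱ (t - 1)) (μ := μ) (hXint t) (integrable_const (1 : ℝ))
          (Filter.Eventually.of_forall fun ω => hX1 t ω)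
        rwa [condExp_const (ℱ.le (t - 1))] at hm
      filter_upwards [h0, h1, hcond t ht] with ω hω0 hω1 hωc
      exact fun _ => ⟨hωc ▸ hω0, hωc ▸ hω1⟩
    · filter_upwards with ω h; omega
  have hSmeas : ∀ n, StronglyMeasurable[ℱ n] (S n) := fun n =>
    Finset.stronglyMeasurable_fun_sum _ fun t ht =>
      (hXadapted.stronglyAdapted t).mono (ℱ.mono (Finset.mem_Icc.1 ht).2)
  have hPmeas : ∀ n, StronglyMeasurable[ℱ n] (P n) := fun n =>
    Finset.stronglyMeasurable_fun_sum _ fun t ht =>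
      (hppred t (Finset.mem_Icc.1 ht).1).mono
        (ℱ.mono (le_trans (Nat.sub_le t 1) (Finset.mem_Icc.1 ht).2))
  have hMmeas : ∀ n, StronglyMeasurable[ℱ n] (M n) := fun n =>
    Real.continuous_exp.comp_stronglyMeasurable (((hPmeas n).const_mul c).sub (hSmeas n))
  have hS0 : ∀ n ω, 0 ≤ S n ω := fun n ω => Finset.sum_nonneg fun t _ => hX0 t ω
  have hMbd : ∀ n, ∀ᵐ ω ∂μ, M n ω ≤ Real.exp (c * n) := by
    intro n
    filter_upwards [hp01] with ω hω
    apply Real.exp_le_exp.2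
    have hP : P n ω ≤ n := by
      calc P n ω ≤ ∑ t ∈ Finset.Icc 1 n, (1 : ℝ) :=
            Finset.sum_le_sum fun t ht => (hω t (Finset.mem_Icc.1 ht).1).2
        _ = n := by simp [Nat.card_Icc]
    nlinarith [hS0 n ω]
  have hMnonneg : ∀ n ω, 0 ≤ M n ω := fun n ω => (Real.exp_pos _).le
  have hMint : ∀ n, Integrable (M n) μ := by
    intro n
    refine (integrable_const (Real.exp (c * n))).mono'
      ((hMmeas n).mono (ℱ.le n)).aestronglyMeasurable ?_
    filter_upwards [hMbd n] with ω hω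
    rw [Real.norm_eq_abs, abs_of_nonneg (hMnonneg n ω)]
    exact hω
  -- the supermartingale step
  have hstep : ∀ n, μ[M (n + 1)|ℱ n] ≤ᵐ[μ] M n := by
    intro n
    have hq : StronglyMeasurable[ℱ n] (p (n + 1)) := by
      simpa using hppred (n + 1) (by omega)
    have hqcond : μ[X (n + 1)|ℱ n] =ᵐ[μ] p (n + 1) := by
      simpa using hcond (n + 1) (by omega)
    set G : Ω → ℝ := fun ω => M n ω * Real.exp (c * p (n + 1) ω) with hGdef
    set F : Ω → ℝ := fun ω => G ω * X (n + 1) ω with hFdef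
    have hGmeas : StronglyMeasurable[ℱ n] G :=
      (hMmeas n).mul (Real.continuous_exp.comp_stronglyMeasurable (hq.const_mul c))
    have hdecomp : M (n + 1) = G - c • F := by
      funext ω
      have hPs : P (n + 1) ω = P n ω + p (n + 1) ω := Finset.sum_Icc_succ_top (by omega) _
      have hSs : S (n + 1) ω = S n ω + X (n + 1) ω := Finset.sum_Icc_succ_top (by omega) _
      have hexpX : Real.exp (-(X (n + 1) ω)) = 1 - c * X (n + 1) ω := by
        rcases hX01 (n + 1) ω with h | h <;> (rw [h]; simp [hcdef])
      have : M (n + 1) ω = M n ω * Real.exp (c * p (n + 1) ω) * Real.exp (-(X (n + 1) ω)) := by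
        simp only [hMdef, hPs, hSs, ← Real.exp_add]
        ring_nf
      rw [Pi.sub_apply, Pi.smul_apply, smul_eq_mul, this, hexpX, hFdef, hGdef]
      ring
    -- integrability
    have hGbd : ∀ᵐ ω ∂μ, ‖G ω‖ ≤ Real.exp (c * n) * Real.exp c := by
      filter_upwards [hMbd n, hp01] with ω h1 h2
      rw [hGdef, Real.norm_eq_abs, abs_of_nonneg (by positivity)]
      have hq1 : p (n + 1) ω ≤ 1 := (h2 (n + 1) (by omega)).2
      have : Real.exp (c * p (n + 1) ω) ≤ Real.exp c := by
        apply Real.exp_le_exp.2; nlinarith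
      exact mul_le_mul h1 this (Real.exp_pos _).le (Real.exp_pos _).le
    have hGint : Integrable G μ := by
      refine (integrable_const (Real.exp (c * n) * Real.exp c)).mono'
        ((hGmeas.mono (ℱ.le n)).aestronglyMeasurable) hGbd
    have hFint : Integrable F μ := by
      refine (integrable_const (Real.exp (c * n) * Real.exp c)).mono'
        ((hGmeas.mono (ℱ.le n)).aestronglyMeasurable.mul
          ((hXadapted.stronglyAdapted (n + 1)).mono (ℱ.le (n + 1))).aestronglyMeasurable) ?_
      filter_upwards [hGbd] with ω hω
      rw [hFdef, Real.norm_eq_abs, abs_mul]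
      calc |G ω| * |X (n + 1) ω| ≤ |G ω| * 1 := by
            apply mul_le_mul_of_nonneg_left _ (abs_nonneg _)
            rw [abs_of_nonneg (hX0 _ ω)]; exact hX1 _ ω
        _ = |G ω| := mul_one _
        _ ≤ _ := by rw [Real.norm_eq_abs] at hω; exact hω
    -- conditional expectation computation
    have e0 : μ[G|ℱ n] = G := condExp_of_stronglyMeasurable (ℱ.le n) hGmeas hGint
    have e1 : μ[F|ℱ n] =ᵐ[μ] fun ω => G ω * p (n + 1) ω := by
      have h := condExp_mul_of_stronglyMeasurable_left (m := ℱ n) hGmeas (by rwa [show G * X (n+1) = F from rfl]) (hXint (n + 1))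
      refine h.trans ?_
      filter_upwards [hqcond] with ω hω
      simp only [Pi.mul_apply, hω]
    have e2 : μ[M (n + 1)|ℱ n] =ᵐ[μ] fun ω => G ω - c * (G ω * p (n + 1) ω) := by
      rw [hdecomp]
      refine (condExp_sub hGint (hFint.smul c) _).trans ?_
      have := condExp_smul (μ := μ) (m := ℱ n) c F
      filter_upwards [this, e1] with ω h1 h2
      have h1' : (μ[c • F|ℱ n]) ω = c * (μ[F|ℱ n]) ω := by
        rw [h1]; simp
      simp only [Pi.sub_apply, e0, h1', h2]
    refine e2.le.trans ?_
    filter_upwards with ω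
    have key := stmt10_exp_mul_one_sub_le (c * p (n + 1) ω)
    have hMn := hMnonneg n ω
    have : G ω - c * (G ω * p (n + 1) ω)
        = M n ω * (Real.exp (c * p (n + 1) ω) * (1 - c * p (n + 1) ω)) := by
      rw [hGdef]; ring
    rw [this]
    calc M n ω * (Real.exp (c * p (n + 1) ω) * (1 - c * p (n + 1) ω))
        ≤ M n ω * 1 := mul_le_mul_of_nonneg_left key hMn
      _ = M n ω := mul_one _
  have hMadp : StronglyAdapted ℱ M := fun n => hMmeas n
  have hsuper : Supermartingale M ℱ μ := supermartingale_nat hMadp hMint hstep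
  have hville := stmt10_ville hsuper hMnonneg (ε := 1 / δ) (by positivity)
  have hM0 : ∫ ω, M 0 ω ∂μ = 1 := by
    have : M 0 = fun _ => (1 : ℝ) := by
      funext ω; simp [hMdef, hSdef, hPdef]
    rw [this]; simp
  have hsub : μ {ω | ∃ n : ℕ, S n ω < P n ω / 2 - Real.log (1 / δ)}
      ≤ μ {ω | ∃ n, 1 / δ ≤ M n ω} := by
    refine measure_mono_ae ?_
    filter_upwards [hp01] with ω hω hE
    obtain ⟨n, hn⟩ := hE
    refine ⟨n, ?_⟩
    have hP0 : 0 ≤ P n ω :=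
      Finset.sum_nonneg fun t ht => (hω t (Finset.mem_Icc.1 ht).1).1
    have hle : Real.log (1 / δ) ≤ c * P n ω - S n ω := by nlinarith
    calc 1 / δ = Real.exp (Real.log (1 / δ)) := (Real.exp_log (by positivity)).symm
      _ ≤ M n ω := Real.exp_le_exp.2 hle
  refine hsub.trans (hville.trans ?_)
  rw [hM0, ENNReal.ofReal_one, show (1:ℝ)/δ = δ⁻¹ from one_div δ,
    ENNReal.ofReal_inv_of_pos hδ, one_div, inv_inv]
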